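/- Let P(θ) = cos(3θ) and Q̃(θ) = α sin(2θ) + β cos(2θ) + γ cos(6θ) with α, β, γ ∈ ℝ. Then ∫_0^{2π} P(θ)^i Q̃'(θ) dθ = 0 and ∫_0^{2π} Q̃(θ)^i P'(θ) dθ = 0 for all i ≥ 0. -/

import Mathlib

open Real intervalIntegral

/-- Shift invariance of the integral over a full period. -/
lemma shift_int (f : ℝ → ℝ) (hper : Function.Periodic f (2 * π)) (c : ℝ) :
    (∫ θ in (0:ℝ)..(2 * π), f (θ + c)) = ∫ θ in (0:ℝ)..(2 * π), f θ := by
  rw [intervalIntegral.integral_comp_add_right]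
  have h := hper.intervalIntegral_add_eq c 0
  rw [show (0:ℝ) + c = c by ring, show 2 * π + c = c + 2 * π by ring]
  simpa using h

/-- An odd periodic function integrates to zero over a full period. -/
lemma odd_int (f : ℝ → ℝ) (hper : Function.Periodic f (2 * π))
    (hodd : ∀ x, f (-x) = - f x) :
    (∫ θ in (0:ℝ)..(2 * π), f θ) = 0 := by
  have h1 : (∫ θ in (0:ℝ)..(2 * π), f θ) = ∫ θ in (-π)..π, f θ := by
    have h := hper.intervalIntegral_add_eq 0 (-π)
    rw [show (0:ℝ) + 2 * π = 2 * π by ring, show -π + 2 * π = π by ring] at h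
    exact h
  have h3 : (∫ θ in (-π)..π, f (-θ)) = ∫ θ in (-π)..π, f θ := by
    simpa using intervalIntegral.integral_comp_neg (a := -π) (b := π) f
  have h4 : (∫ θ in (-π)..π, f (-θ)) = - ∫ θ in (-π)..π, f θ := by
    simp only [hodd]
    exact intervalIntegral.integral_neg
  rw [h1]
  linarith [h3, h4]

/-- A π-antiperiodic continuous function integrates to zero over [0, 2π]. -/
lemma anti_int (f : ℝ → ℝ) (hf : Continuous f) (h : ∀ x, f (x + π) = - f x) :
    (∫ θ in (0:ℝ)..(2 * π), f θ) = 0 := by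
  have hi1 : IntervalIntegrable f MeasureTheory.volume 0 π := hf.intervalIntegrable _ _
  have hi2 : IntervalIntegrable f MeasureTheory.volume π (2 * π) := hf.intervalIntegrable _ _
  have hsum := intervalIntegral.integral_add_adjacent_intervals hi1 hi2
  have h2 : (∫ θ in (0:ℝ)..π, f (θ + π)) = ∫ θ in π..(2 * π), f θ := by
    rw [intervalIntegral.integral_comp_add_right]
    norm_num [two_mul]
  have h3 : (∫ θ in (0:ℝ)..π, f (θ + π)) = - ∫ θ in (0:ℝ)..π, f θ := by
    simp only [h]
    exact intervalIntegral.integral_neg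
  linarith

lemma sum3 (x : ℝ) :
    Real.cos x + Real.cos (x + 4 * π / 3) + Real.cos (x + 8 * π / 3) = 0 := by
  have hc4 : Real.cos (4 * π / 3) = -(1 / 2) := by
    rw [show (4 * π / 3 : ℝ) = π + π / 3 by ring, Real.cos_add]
    simp [Real.cos_pi_div_three]
  have hs4 : Real.sin (4 * π / 3) = -(Real.sqrt 3 / 2) := by
    rw [show (4 * π / 3 : ℝ) = π + π / 3 by ring, Real.sin_add]
    simp [Real.sin_pi_div_three]
  have hc8 : Real.cos (8 * π / 3) = -(1 / 2) := by
    rw [show (8 * π / 3 : ℝ) = (π - π / 3) + 2 * π by ring, Real.cos_add_two_pi,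
      Real.cos_pi_sub, Real.cos_pi_div_three]
  have hs8 : Real.sin (8 * π / 3) = Real.sqrt 3 / 2 := by
    rw [show (8 * π / 3 : ℝ) = (π - π / 3) + 2 * π by ring, Real.sin_add_two_pi,
      Real.sin_pi_sub, Real.sin_pi_div_three]
  rw [Real.cos_add, Real.cos_add, hc4, hs4, hc8, hs8]
  ring

theorem cgm_example_moments_vanish (α β γ : ℝ) :
    ∀ i : ℕ,
      (∫ θ in (0:ℝ)..(2 * π),
          (Real.cos (3 * θ)) ^ i *
            (2 * α * Real.cos (2 * θ) - 2 * β * Real.sin (2 * θ)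
              - 6 * γ * Real.sin (6 * θ)) = 0) ∧
      (∫ θ in (0:ℝ)..(2 * π),
          (α * Real.sin (2 * θ) + β * Real.cos (2 * θ) + γ * Real.cos (6 * θ)) ^ i *
            (-3 * Real.sin (3 * θ)) = 0) := by
  intro i
  constructor
  · -- first integral
    set f1 : ℝ → ℝ := fun θ => (Real.cos (3 * θ)) ^ i * (2 * α * Real.cos (2 * θ)) with hf1
    set f2 : ℝ → ℝ := fun θ => (Real.cos (3 * θ)) ^ i * (2 * β * Real.sin (2 * θ)) with hf2
    set f3 : ℝ → ℝ := fun θ => (Real.cos (3 * θ)) ^ i * (6 * γ * Real.sin (6 * θ)) with hf3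
    have hc1 : Continuous f1 := by fun_prop
    have hc2 : Continuous f2 := by fun_prop
    have hc3 : Continuous f3 := by fun_prop
    have hI1 : (∫ θ in (0:ℝ)..(2 * π), f1 θ) = 0 := by
      have hper : Function.Periodic f1 (2 * π) := by
        intro x
        simp only [hf1]
        rw [show 3 * (x + 2 * π) = 3 * x + (3 : ℕ) * (2 * π) by push_cast; ring,
          Real.cos_add_nat_mul_two_pi,
          show 2 * (x + 2 * π) = 2 * x + (2 : ℕ) * (2 * π) by push_cast; ring,
          Real.cos_add_nat_mul_two_pi]
      have e1 := shift_int f1 hper (2 * π / 3)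
      have e2 := shift_int f1 hper (4 * π / 3)
      have hzero : ∀ θ : ℝ, f1 θ + f1 (θ + 2 * π / 3) + f1 (θ + 4 * π / 3) = 0 := by
        intro θ
        simp only [hf1]
        rw [show 3 * (θ + 2 * π / 3) = 3 * θ + 2 * π by ring, Real.cos_add_two_pi,
          show 3 * (θ + 4 * π / 3) = (3 * θ + 2 * π) + 2 * π by ring, Real.cos_add_two_pi,
          Real.cos_add_two_pi,
          show 2 * (θ + 2 * π / 3) = 2 * θ + 4 * π / 3 by ring,
          show 2 * (θ + 4 * π / 3) = 2 * θ + 8 * π / 3 by ring]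
        have h := sum3 (2 * θ)
        linear_combination ((Real.cos (3 * θ)) ^ i * (2 * α)) * h
      have hii1 : IntervalIntegrable (fun θ => f1 (θ + 2 * π / 3))
          MeasureTheory.volume 0 (2 * π) :=
        (hc1.comp (by continuity)).intervalIntegrable _ _
      have hii2 : IntervalIntegrable (fun θ => f1 (θ + 4 * π / 3))
          MeasureTheory.volume 0 (2 * π) :=
        (hc1.comp (by continuity)).intervalIntegrable _ _
      have hsplit : (∫ θ in (0:ℝ)..(2 * π),
          (f1 θ + f1 (θ + 2 * π / 3) + f1 (θ + 4 * π / 3))) =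
          (∫ θ in (0:ℝ)..(2 * π), f1 θ) + (∫ θ in (0:ℝ)..(2 * π), f1 (θ + 2 * π / 3))
            + ∫ θ in (0:ℝ)..(2 * π), f1 (θ + 4 * π / 3) := by
        rw [intervalIntegral.integral_add ((hc1.intervalIntegrable _ _).add hii1) hii2,
          intervalIntegral.integral_add (hc1.intervalIntegrable _ _) hii1]
      have hz : (∫ θ in (0:ℝ)..(2 * π),
          (f1 θ + f1 (θ + 2 * π / 3) + f1 (θ + 4 * π / 3))) = 0 := by
        simp [hzero]
      rw [e1, e2] at hsplit
      rw [hz] at hsplit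
      linarith
    have hI2 : (∫ θ in (0:ℝ)..(2 * π), f2 θ) = 0 := by
      apply odd_int
      · intro x
        simp only [hf2]
        rw [show 3 * (x + 2 * π) = 3 * x + (3 : ℕ) * (2 * π) by push_cast; ring,
          Real.cos_add_nat_mul_two_pi,
          show 2 * (x + 2 * π) = 2 * x + (2 : ℕ) * (2 * π) by push_cast; ring,
          Real.sin_add_nat_mul_two_pi]
      · intro x
        simp only [hf2]
        rw [show 3 * (-x) = -(3 * x) by ring, show 2 * (-x) = -(2 * x) by ring,
          Real.cos_neg, Real.sin_neg]
        ring
    have hI3 : (∫ θ in (0:ℝ)..(2 * π), f3 θ) = 0 := by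
      apply odd_int
      · intro x
        simp only [hf3]
        rw [show 3 * (x + 2 * π) = 3 * x + (3 : ℕ) * (2 * π) by push_cast; ring,
          Real.cos_add_nat_mul_two_pi,
          show 6 * (x + 2 * π) = 6 * x + (6 : ℕ) * (2 * π) by push_cast; ring,
          Real.sin_add_nat_mul_two_pi]
      · intro x
        simp only [hf3]
        rw [show 3 * (-x) = -(3 * x) by ring, show 6 * (-x) = -(6 * x) by ring,
          Real.cos_neg, Real.sin_neg]
        ring
    have hdecomp : (∫ θ in (0:ℝ)..(2 * π),
        (Real.cos (3 * θ)) ^ i *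
          (2 * α * Real.cos (2 * θ) - 2 * β * Real.sin (2 * θ)
            - 6 * γ * Real.sin (6 * θ))) =
        (∫ θ in (0:ℝ)..(2 * π), f1 θ) - (∫ θ in (0:ℝ)..(2 * π), f2 θ)
          - ∫ θ in (0:ℝ)..(2 * π), f3 θ := by
      rw [← intervalIntegral.integral_sub (hc1.intervalIntegrable _ _)
          (hc2.intervalIntegrable _ _),
        ← intervalIntegral.integral_sub
          ((show Continuous (fun x => f1 x - f2 x) from hc1.sub hc2).intervalIntegrable _ _) (hc3.intervalIntegrable _ _)]
      congr 1
      funext θ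
      simp only [hf1, hf2, hf3]
      ring
    rw [hdecomp, hI1, hI2, hI3]
    ring
  · -- second integral
    apply anti_int
    · fun_prop
    · intro x
      rw [show 2 * (x + π) = 2 * x + 2 * π by ring, Real.sin_add_two_pi, Real.cos_add_two_pi,
        show 6 * (x + π) = 6 * x + (3 : ℕ) * (2 * π) by push_cast; ring,
        Real.cos_add_nat_mul_two_pi,
        show 3 * (x + π) = (3 * x + π) + 2 * π by ring, Real.sin_add_two_pi, Real.sin_add_pi]
      ring
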